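/- Let G act sharply 2-transitively on Ω with |Ω| ≥ 2, suppose some point stabilizer contains an involution, and suppose there exist two distinct involutions σ, τ whose product στ has finite order n. Then n is prime. -/
import Mathlib

def IsSharply2Transitive (G Ω : Type*) [Group G] [MulAction G Ω] : Prop :=
  ∀ x y z w : Ω, x ≠ y → z ≠ w → ∃! g : G, g • x = z ∧ g • y = w

section S2TAux

variable {G Ω : Type*} [Group G] [MulAction G Ω]

private lemma s2t_eq_of_pair (h : IsSharply2Transitive G Ω) {g₁ g₂ : G} {x y : Ω} (hxy : x ≠ y)
    (hx : g₁ • x = g₂ • x) (hy : g₁ • y = g₂ • y) : g₁ = g₂ := by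
  have hzw : g₂ • x ≠ g₂ • y := fun e => hxy (MulAction.injective g₂ e)
  obtain ⟨g, _, hu⟩ := h x y (g₂ • x) (g₂ • y) hxy hzw
  have h1 : g₁ = g := hu g₁ ⟨hx, hy⟩
  have h2 : g₂ = g := hu g₂ ⟨rfl, rfl⟩
  rw [h1, h2]

private lemma s2t_eq_one (h : IsSharply2Transitive G Ω) {g : G} {x y : Ω} (hxy : x ≠ y)
    (hx : g • x = x) (hy : g • y = y) : g = 1 :=
  s2t_eq_of_pair h hxy (by simpa using hx) (by simpa using hy)

private lemma invo_sq {σ : G} (hσ : orderOf σ = 2) : σ * σ = 1 := by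
  have := pow_orderOf_eq_one σ
  rwa [hσ, pow_two] at this

private lemma invo_ne_one {σ : G} (hσ : orderOf σ = 2) : σ ≠ 1 := by
  intro e; rw [e, orderOf_one] at hσ; norm_num at hσ

private lemma invo_inv_eq {σ : G} (hσ : orderOf σ = 2) : σ⁻¹ = σ :=
  inv_eq_of_mul_eq_one_right (invo_sq hσ)

private lemma s2t_fix_unique (h : IsSharply2Transitive G Ω) {g : G} (hg : g ≠ 1) {x y : Ω}
    (hx : g • x = x) (hy : g • y = y) : x = y := by
  by_contra hxy; exact hg (s2t_eq_one h hxy hx hy)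

private lemma s2t_exists_moved [Nontrivial Ω] (h : IsSharply2Transitive G Ω) {g : G}
    (hg : g ≠ 1) : ∃ x : Ω, g • x ≠ x := by
  by_contra hall
  push_neg at hall
  obtain ⟨x, y, hxy⟩ := exists_pair_ne Ω
  exact hg (s2t_eq_one h hxy (hall x) (hall y))

private lemma orderOf_conj' (g x : G) : orderOf (g * x * g⁻¹) = orderOf x :=
  ((show SemiconjBy g x (g * x * g⁻¹) by unfold SemiconjBy; group).orderOf_eq g).symm

/-- every involution has a fixed point, given one involution with a fixed point -/
private lemma s2t_inv_has_fix [Nontrivial Ω] (h : IsSharply2Transitive G Ω)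
    (hinv : ∃ (ω : Ω) (ρ : G), orderOf ρ = 2 ∧ ρ • ω = ω) {ζ : G} (hζ : orderOf ζ = 2) :
    ∃ w : Ω, ζ • w = w := by
  obtain ⟨ω, ρ, hρ, hρω⟩ := hinv
  obtain ⟨a, ha⟩ := s2t_exists_moved h (invo_ne_one hρ)
  obtain ⟨x, hx⟩ := s2t_exists_moved h (invo_ne_one hζ)
  obtain ⟨g, ⟨hg1, hg2⟩, -⟩ := h a (ρ • a) x (ζ • x) (Ne.symm ha) (Ne.symm hx)
  have hρρ := invo_sq hρ
  have hζζ := invo_sq hζ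
  have key : g * ρ * g⁻¹ = ζ := by
    apply s2t_eq_of_pair h (Ne.symm hx)
    · have h0 : g⁻¹ • x = a := by rw [← hg1, inv_smul_smul]
      rw [mul_smul, mul_smul, h0, hg2]
    · have h1 : g⁻¹ • (ζ • x) = ρ • a := by rw [← hg2, inv_smul_smul]
      have h2 : ζ • ζ • x = x := by rw [← mul_smul ζ ζ, hζζ, one_smul]
      rw [mul_smul, mul_smul, h1, ← mul_smul ρ ρ, hρρ, one_smul, hg1, h2]
  refine ⟨g • ω, ?_⟩
  rw [← key, mul_smul, mul_smul, inv_smul_smul, hρω]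

/-- key uniqueness: two involutions fixing the same point coincide -/
private lemma s2t_inv_fix_unique [Nontrivial Ω] (h : IsSharply2Transitive G Ω)
    (hinv : ∃ (ω : Ω) (ρ : G), orderOf ρ = 2 ∧ ρ • ω = ω) {x : Ω} {ε ε' : G}
    (hε : orderOf ε = 2) (hε' : orderOf ε' = 2) (hfix : ε • x = x) (hfix' : ε' • x = x) :
    ε = ε' := by
  obtain ⟨q, hq⟩ := exists_ne x
  -- u := swap of x and q
  obtain ⟨u, ⟨hux, huq⟩, -⟩ := h x q q x (Ne.symm hq) hq
  have huu : u * u = 1 := by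
    refine s2t_eq_one h (Ne.symm hq) ?_ ?_
    · rw [mul_smul, hux, huq]
    · rw [mul_smul, huq, hux]
  have hu1 : u ≠ 1 := by
    intro e; rw [e, one_smul] at hux; exact hq hux.symm
  have huord : orderOf u = 2 := orderOf_eq_prime (by rwa [pow_two]) hu1
  -- w := fixed point of u
  obtain ⟨w, hw⟩ := s2t_inv_has_fix h hinv huord
  have hwx : w ≠ x := by intro e; rw [e, hux] at hw; exact hq hw
  -- k : (x, w) ↦ (x, q)
  obtain ⟨k, ⟨hkx, hkw⟩, hkuniq⟩ := h x w x q (Ne.symm hwx) (Ne.symm hq)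
  -- key claim: for any involution ε₀ fixing x, ε₀ • q = u • (k • q)
  have key : ∀ ε₀ : G, orderOf ε₀ = 2 → ε₀ • x = x → ε₀ • q = u • (k • q) := by
    intro ε₀ hε₀ hfix₀
    have hε₀ε₀ : ε₀ * ε₀ = 1 := invo_sq hε₀
    have hε₀q : ε₀ • q ≠ q := fun e => invo_ne_one hε₀ (s2t_eq_one h (Ne.symm hq) hfix₀ e)
    have hy'x : u • (ε₀ • q) ≠ x := by
      intro e
      have e2 : u • (u • (ε₀ • q)) = u • x := congrArg (u • ·) e
      rw [← mul_smul u u, huu, one_smul, hux] at e2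
      exact hε₀q e2
    -- kt : (x, q) ↦ (x, u • (ε₀ • q))
    obtain ⟨kt, ⟨hktx, hktq⟩, -⟩ := h x q x (u • (ε₀ • q)) (Ne.symm hq) (Ne.symm hy'x)
    have hktinvx : kt⁻¹ • x = x := by rw [inv_smul_eq_iff, hktx]
    have hktinvy' : kt⁻¹ • (u • (ε₀ • q)) = q := by rw [inv_smul_eq_iff, hktq]
    -- v := u * ε₀ * u agrees with kt * u * kt⁻¹ on the pair (x, u • (ε₀ • q))
    have hveq : u * ε₀ * u = kt * u * kt⁻¹ := by
      apply s2t_eq_of_pair h (Ne.symm hy'x)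
      · rw [mul_smul, mul_smul, hux, mul_smul, mul_smul, hktinvx, hux, hktq]
      · rw [mul_smul, mul_smul, ← mul_smul u u, huu, one_smul,
          ← mul_smul ε₀ ε₀, hε₀ε₀, one_smul, huq,
          mul_smul, mul_smul, hktinvy', huq, hktx]
    -- v fixes q, hence u fixes kt⁻¹ • q, hence kt⁻¹ • q = w
    have hvq : (u * ε₀ * u) • q = q := by
      rw [mul_smul, mul_smul, huq, hfix₀, hux]
    have hvq2 : kt • (u • (kt⁻¹ • q)) = q := by
      rw [hveq] at hvq
      rw [mul_smul, mul_smul] at hvq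
      exact hvq
    have hufix : u • (kt⁻¹ • q) = kt⁻¹ • q := by
      have e3 := congrArg (kt⁻¹ • ·) hvq2
      simpa [inv_smul_smul] using e3
    have hktw : kt⁻¹ • q = w := s2t_fix_unique h hu1 hufix hw
    have hktw' : kt • w = q := by rw [← hktw, smul_inv_smul]
    have hkteqk : kt = k := hkuniq kt ⟨hktx, hktw'⟩
    have : u • (u • (ε₀ • q)) = u • (kt • q) := congrArg (u • ·) hktq.symm
    rw [← mul_smul u u, huu, one_smul] at this
    rw [this, hkteqk]
  have e1 := key ε hε hfix
  have e2 := key ε' hε' hfix'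
  exact s2t_eq_of_pair h (Ne.symm hq) (by rw [hfix, hfix']) (by rw [e1, e2])

/-- any two nonidentity products of two involutions are conjugate -/
private lemma s2t_trans_conj [Nontrivial Ω] (h : IsSharply2Transitive G Ω)
    (hinv : ∃ (ω : Ω) (ρ : G), orderOf ρ = 2 ∧ ρ • ω = ω) {a b a' b' : G}
    (ha : orderOf a = 2) (hb : orderOf b = 2) (ha' : orderOf a' = 2) (hb' : orderOf b' = 2)
    (hab : a * b ≠ 1) (hab' : a' * b' ≠ 1) :
    ∃ g : G, g * (a * b) * g⁻¹ = a' * b' := by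
  obtain ⟨p, hp⟩ := s2t_inv_has_fix h hinv ha
  obtain ⟨r, hr⟩ := s2t_inv_has_fix h hinv hb
  obtain ⟨p', hp'⟩ := s2t_inv_has_fix h hinv ha'
  obtain ⟨r', hr'⟩ := s2t_inv_has_fix h hinv hb'
  have hpr : p ≠ r := by
    intro e
    subst e
    exact hab (by rw [s2t_inv_fix_unique h hinv ha hb hp hr]; exact invo_sq hb)
  have hpr' : p' ≠ r' := by
    intro e
    subst e
    exact hab' (by rw [s2t_inv_fix_unique h hinv ha' hb' hp' hr']; exact invo_sq hb')
  obtain ⟨g, ⟨hg1, hg2⟩, -⟩ := h p r p' r' hpr hpr'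
  have hconj : ∀ (c c' : G) (s s' : Ω), orderOf c = 2 → orderOf c' = 2 → c • s = s →
      c' • s' = s' → g • s = s' → g * c * g⁻¹ = c' := by
    intro c c' s s' hc hc' hcs hc's hgs
    have hfix2 : (g * c * g⁻¹) • s' = s' := by
      rw [← hgs, mul_smul, mul_smul, inv_smul_smul, hcs]
    have hord : orderOf (g * c * g⁻¹) = 2 := by rw [orderOf_conj']; exact hc
    exact s2t_inv_fix_unique h hinv hord hc' hfix2 hc's
  have hga : g * a * g⁻¹ = a' := hconj a a' p p' ha ha' hp hp' hg1
  have hgb : g * b * g⁻¹ = b' := hconj b b' r r' hb hb' hr hr' hg2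
  refine ⟨g, ?_⟩
  have e : g * (a * b) * g⁻¹ = (g * a * g⁻¹) * (g * b * g⁻¹) := by group
  rw [e, hga, hgb]

end S2TAux

theorem orderOf_prod_involutions_prime {G Ω : Type*} [Group G] [MulAction G Ω]
    [Nontrivial Ω] (h : IsSharply2Transitive G Ω)
    (hinv : ∃ (ω : Ω) (ρ : G), orderOf ρ = 2 ∧ ρ • ω = ω)
    (σ τ : G) (hσ : orderOf σ = 2) (hτ : orderOf τ = 2) (hne : σ ≠ τ)
    (n : ℕ) (hn : orderOf (σ * τ) = n) (hn0 : n ≠ 0) : n.Prime := by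
  have hσσ := invo_sq hσ
  have hττ := invo_sq hτ
  have hαne : σ * τ ≠ 1 := by
    intro e
    apply hne
    have e2 : σ = τ⁻¹ := eq_inv_of_mul_eq_one_left e
    rwa [invo_inv_eq hτ] at e2
  have hinvert : σ * (σ * τ) * σ⁻¹ = (σ * τ)⁻¹ := by
    rw [invo_inv_eq hσ]
    calc σ * (σ * τ) * σ = (σ * σ) * (τ * σ) := by group
      _ = τ * σ := by rw [hσσ, one_mul]
      _ = (σ * τ)⁻¹ := by rw [mul_inv_rev, invo_inv_eq hσ, invo_inv_eq hτ]
  have hn1 : n ≠ 1 := by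
    intro e
    rw [e] at hn
    exact hαne (orderOf_eq_one_iff.mp hn)
  rw [Nat.prime_def]
  refine ⟨by omega, fun m hm => ?_⟩
  by_cases hmn : m = n
  · right; exact hmn
  left
  have hmpos : m ≠ 0 := by rintro rfl; exact hn0 (Nat.eq_zero_of_zero_dvd hm)
  have hmlt : m < n := lt_of_le_of_ne (Nat.le_of_dvd (Nat.pos_of_ne_zero hn0) hm) hmn
  by_cases hα2 : (σ * τ) * (σ * τ) = 1
  · -- then n = 2 and therefore m = 1
    have h2 : orderOf (σ * τ) = 2 := orderOf_eq_prime (by rwa [pow_two]) hαne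
    rw [hn] at h2
    have hle := Nat.le_of_dvd (by omega) hm
    omega
  · -- general case: κ := σ * (σ*τ)^m is an involution, σ * κ = (σ*τ)^m
    have hinvpow : σ * (σ * τ) ^ m * σ⁻¹ = ((σ * τ) ^ m)⁻¹ := by
      rw [← conj_pow, hinvert, inv_pow]
    have hconjm : σ * (σ * τ) ^ m * σ = ((σ * τ) ^ m)⁻¹ := by
      rw [← hinvpow, invo_inv_eq hσ]
    have hκκ : (σ * (σ * τ) ^ m) * (σ * (σ * τ) ^ m) = 1 := by
      calc (σ * (σ * τ) ^ m) * (σ * (σ * τ) ^ m)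
          = (σ * (σ * τ) ^ m * σ) * (σ * τ) ^ m := by group
        _ = ((σ * τ) ^ m)⁻¹ * (σ * τ) ^ m := by rw [hconjm]
        _ = 1 := inv_mul_cancel _
    have hαm_ne : (σ * τ) ^ m ≠ 1 := by
      intro e
      have hd := orderOf_dvd_of_pow_eq_one e
      rw [hn] at hd
      exact absurd (Nat.le_of_dvd (Nat.pos_of_ne_zero hmpos) hd) (by omega)
    have hκ1 : σ * (σ * τ) ^ m ≠ 1 := by
      intro e
      have hσα : σ = ((σ * τ) ^ m)⁻¹ := eq_inv_of_mul_eq_one_left e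
      have hcomm : σ * (σ * τ) = (σ * τ) * σ := by
        have hc := (((Commute.refl (σ * τ)).pow_right m).inv_right).eq.symm
        rwa [← hσα] at hc
      have hselfinv : (σ * τ)⁻¹ = σ * τ := by
        rw [← hinvert, hcomm, mul_assoc, mul_inv_cancel, mul_one]
      exact hα2 (mul_eq_one_iff_inv_eq.mpr hselfinv)
    have hκord : orderOf (σ * (σ * τ) ^ m) = 2 := orderOf_eq_prime (by rwa [pow_two]) hκ1
    have hσκ : σ * (σ * (σ * τ) ^ m) = (σ * τ) ^ m := by
      rw [← mul_assoc, hσσ, one_mul]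
    obtain ⟨g, hg⟩ := s2t_trans_conj h hinv hσ hτ hσ hκord hαne (by rwa [hσκ])
    rw [hσκ] at hg
    have hord : orderOf ((σ * τ) ^ m) = n := by rw [← hg, orderOf_conj', hn]
    rw [orderOf_pow_of_dvd hmpos (by rw [hn]; exact hm), hn] at hord
    -- n / m = n with m ∣ n, n ≠ 0 ⇒ m = 1
    have hdm := Nat.div_mul_cancel hm
    rw [hord] at hdm
    have hnm : n * m = n * 1 := by omega
    exact Nat.eq_of_mul_eq_mul_left (Nat.pos_of_ne_zero hn0) hnm
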